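/- Let α₀ be a unit of R such that x^n − α₀ is basic irreducible over R, let α = α₀^{p^s}, write f = x^n − α₀, and let K = R[x]/⟨x^{np^s} − α⟩. Then every ideal C of K is of one of the following forms: (I) C = {0} or C = K; (II) C = ⟨γ f^τ⟩ for some 0 ≤ τ < p^s; (III) C = ⟨f^ω + γ f^t G⟩ where 0 < ω < p^s, G is either 0 or a unit of K, and 0 ≤ t < ω when G ≠ 0; (IV) C = ⟨f^ω + γ f^t G, γ f^μ⟩ where 0 ≤ μ < ω < p^s, G is either 0 or a unit of K, and 0 ≤ t < μ when G ≠ 0. -/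

import Mathlib

open Polynomial

theorem aux_span_pair_add {A : Type*} [CommRing A] (a b y : A) :
    Ideal.span {a + b * y, b} = Ideal.span ({a, b} : Set A) := by
  apply le_antisymm <;> rw [Ideal.span_le] <;> rintro z hz <;>
    simp only [Set.mem_insert_iff, Set.mem_singleton_iff] at hz
  · rcases hz with rfl | rfl
    · exact Ideal.mem_span_pair.mpr ⟨1, y, by ring⟩
    · exact Ideal.mem_span_pair.mpr ⟨0, 1, by ring⟩
  · rcases hz with rfl | rfl
    · exact Ideal.mem_span_pair.mpr ⟨1, -y, by ring⟩
    · exact Ideal.mem_span_pair.mpr ⟨0, 1, by ring⟩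

theorem aux_span_pair_mem {A : Type*} [CommRing A] (a b : A)
    (h : b ∈ Ideal.span ({a} : Set A)) :
    Ideal.span ({a, b} : Set A) = Ideal.span {a} := by
  apply le_antisymm
  · rw [Ideal.span_le]
    rintro z hz
    simp only [Set.mem_insert_iff, Set.mem_singleton_iff] at hz
    rcases hz with rfl | rfl
    · exact Ideal.subset_span rfl
    · exact h
  · exact Ideal.span_mono (Set.singleton_subset_iff.mpr (Set.mem_insert _ _))

set_option maxHeartbeats 2000000 in
theorem stmt8 {R : Type} [CommRing R] [Finite R]
    (p m s n : ℕ) (hp : p.Prime) (hm : 0 < m) (hs : 0 < s) (hn : 0 < n)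
    (hnp : Nat.gcd n p = 1)
    (γ : R) (hγ : γ ≠ 0) (hγ2 : γ ^ 2 = 0)
    (hmax : ∀ a : R, a ∈ Ideal.span {γ} ↔ ¬ IsUnit a)
    (hres : Nat.card (R ⧸ Ideal.span {γ}) = p ^ m)
    (α₀ : R) (hα₀ : IsUnit α₀)
    (hirr : Irreducible ((X ^ n - C α₀ : R[X]).map (Ideal.Quotient.mk (Ideal.span {γ})))) :
    ∀ I : Ideal (R[X] ⧸ Ideal.span {(X ^ (n * p ^ s) - C (α₀ ^ p ^ s) : R[X])}),
      I = ⊥ ∨ I = ⊤ ∨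
      (∃ τ, τ < p ^ s ∧
        I = Ideal.span {Ideal.Quotient.mk
          (Ideal.span {(X ^ (n * p ^ s) - C (α₀ ^ p ^ s) : R[X])})
          (C γ * (X ^ n - C α₀) ^ τ)}) ∨
      (∃ ω t : ℕ, ∃ G : R[X] ⧸ Ideal.span {(X ^ (n * p ^ s) - C (α₀ ^ p ^ s) : R[X])},
        0 < ω ∧ ω < p ^ s ∧ (G = 0 ∨ IsUnit G) ∧ (G ≠ 0 → t < ω) ∧
        I = Ideal.span {Ideal.Quotient.mk
            (Ideal.span {(X ^ (n * p ^ s) - C (α₀ ^ p ^ s) : R[X])})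
            ((X ^ n - C α₀) ^ ω) +
          Ideal.Quotient.mk (Ideal.span {(X ^ (n * p ^ s) - C (α₀ ^ p ^ s) : R[X])})
            (C γ * (X ^ n - C α₀) ^ t) * G}) ∨
      (∃ ω t μ : ℕ, ∃ G : R[X] ⧸ Ideal.span {(X ^ (n * p ^ s) - C (α₀ ^ p ^ s) : R[X])},
        μ < ω ∧ ω < p ^ s ∧ (G = 0 ∨ IsUnit G) ∧ (G ≠ 0 → t < μ) ∧
        I = Ideal.span {Ideal.Quotient.mk
            (Ideal.span {(X ^ (n * p ^ s) - C (α₀ ^ p ^ s) : R[X])})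
            ((X ^ n - C α₀) ^ ω) +
          Ideal.Quotient.mk (Ideal.span {(X ^ (n * p ^ s) - C (α₀ ^ p ^ s) : R[X])})
            (C γ * (X ^ n - C α₀) ^ t) * G,
          Ideal.Quotient.mk (Ideal.span {(X ^ (n * p ^ s) - C (α₀ ^ p ^ s) : R[X])})
            (C γ * (X ^ n - C α₀) ^ μ)}) := by
  haveI : Fact p.Prime := ⟨hp⟩
  set f : R[X] := X ^ n - C α₀ with hfdef
  set g : R[X] := X ^ (n * p ^ s) - C (α₀ ^ p ^ s) with hgdef
  set mkγ := Ideal.Quotient.mk (Ideal.span {γ}) with hmkγ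
  set π := Ideal.Quotient.mk (Ideal.span {g}) with hπ
  set ρ := Polynomial.mapRingHom mkγ with hρ
  intro I
  -- the residue field
  have hIne : Ideal.span {γ} ≠ (⊤ : Ideal R) := by
    intro h
    exact (hmax 1).mp (h ▸ Submodule.mem_top) isUnit_one
  haveI := Ideal.Quotient.nontrivial_iff.mpr hIne
  have hfield : IsField (R ⧸ Ideal.span {γ}) := by
    refine ⟨Nontrivial.exists_pair_ne, mul_comm, ?_⟩
    intro a ha
    obtain ⟨r, rfl⟩ := Ideal.Quotient.mk_surjective a
    have hr : ¬ r ∈ Ideal.span {γ} := fun h => ha (Ideal.Quotient.eq_zero_iff_mem.mpr h)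
    have hru : IsUnit r := not_not.mp (fun h => hr ((hmax r).mpr h))
    exact ⟨mkγ ↑hru.unit⁻¹, by rw [← map_mul, IsUnit.mul_val_inv, map_one]⟩
  letI : Field (R ⧸ Ideal.span {γ}) := hfield.toField
  -- characteristic of the residue field
  haveI hcharF : CharP (R ⧸ Ideal.span {γ}) p := by
    obtain ⟨q, hq⟩ := CharP.exists (R ⧸ Ideal.span {γ})
    haveI := hq
    haveI : Finite (R ⧸ Ideal.span {γ}) := Finite.of_surjective _ Ideal.Quotient.mk_surjective
    haveI : Fintype (R ⧸ Ideal.span {γ}) := Fintype.ofFinite _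
    obtain ⟨k, hqp, hcard⟩ := FiniteField.card (R ⧸ Ideal.span {γ}) q
    have hpm : p ^ m = q ^ (k : ℕ) := by
      rw [← hres, Nat.card_eq_fintype_card, hcard]
    have hpq : p = q :=
      (Nat.prime_dvd_prime_iff_eq hp hqp).mp
        (hp.dvd_of_dvd_pow (hpm ▸ dvd_pow_self p hm.ne'))
    exact hpq ▸ hq
  haveI : CharP ((R ⧸ Ideal.span {γ})[X]) p := charP_of_injective_ringHom C_injective p
  -- surjectivity of reduction
  have hρs : Function.Surjective ⇑ρ := by
    rw [hρ, coe_mapRingHom]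
    exact Polynomial.map_surjective mkγ Ideal.Quotient.mk_surjective
  -- kernel of reduction
  have hker : RingHom.ker ρ = Ideal.span {C γ} := by
    rw [hρ, Polynomial.ker_mapRingHom, hmkγ, Ideal.mk_ker, Ideal.map_span,
      Set.image_singleton]
  have hCC : C γ * C γ = (0 : R[X]) := by
    rw [← C_mul, ← pow_two, hγ2, C_0]
  -- the reduced f
  have hρf : ρ f = X ^ n - C (mkγ α₀) := by
    rw [hρ, coe_mapRingHom, hfdef, Polynomial.map_sub, Polynomial.map_pow, map_X, map_C]
  have hirr' : Irreducible (ρ f) := by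
    rw [hρ, coe_mapRingHom]; exact hirr
  have hfm : (f : R[X]).Monic := monic_X_pow_sub_C α₀ hn.ne'
  have hρfm : (ρ f).Monic := by
    rw [hρ, coe_mapRingHom]; exact hfm.map mkγ
  have hρfnd : (ρ f).natDegree = n := by
    rw [hρf]; exact natDegree_X_pow_sub_C
  have hfp : Prime (ρ f) := hirr'.prime
  have hρg : ρ g = (ρ f) ^ p ^ s := by
    have h1 : (ρ f) ^ p ^ s
        = X ^ (n * p ^ s) - C ((mkγ α₀) ^ p ^ s) := by
      rw [hρf, sub_pow_char_pow, ← pow_mul, ← C_pow]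
    rw [h1, hρ, coe_mapRingHom, hgdef, Polynomial.map_sub, Polynomial.map_pow, map_X,
      map_C, map_pow]
  -- g = f ^ (p^s) + (C γ) * h₀
  have hgf : ∃ h₀ : R[X], h₀ * C γ = g - f ^ p ^ s := by
    have : g - f ^ p ^ s ∈ RingHom.ker ρ := by
      rw [RingHom.mem_ker, map_sub, map_pow, hρg, sub_self]
    rw [hker, Ideal.mem_span_singleton'] at this
    exact this
  obtain ⟨h₀, hh₀⟩ := hgf
  -- basic elements of K
  have hπg : π g = 0 := Ideal.Quotient.eq_zero_iff_mem.mpr (Ideal.subset_span rfl)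
  have hγK : (π (C γ)) ^ 2 = 0 := by
    rw [← map_pow, ← C_pow, hγ2, C_0, map_zero]
  have hγnil : IsNilpotent (π (C γ)) := ⟨2, hγK⟩
  have hfN : (π f) ^ p ^ s = -(π h₀ * π (C γ)) := by
    have h2 : f ^ p ^ s = g - h₀ * C γ := by rw [hh₀]; ring
    rw [← map_pow, h2, map_sub, hπg, zero_sub, map_mul]
  have hfnil : IsNilpotent (π f) := by
    refine ⟨p ^ s * 2, ?_⟩
    rw [pow_mul, hfN]
    have h3 : (-(π h₀ * π (C γ))) ^ 2 = π h₀ ^ 2 * π (C γ) ^ 2 := by ring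
    rw [h3, hγK, mul_zero]
  -- units of K
  have hunit : ∀ v : R[X], ¬ (ρ f ∣ ρ v) → IsUnit (π v) := by
    intro v hv
    obtain ⟨a', b', hab⟩ := (hirr'.coprime_iff_not_dvd).mpr hv
    obtain ⟨a, ha⟩ := hρs a'
    obtain ⟨b, hb⟩ := hρs b'
    have hker1 : a * f + b * v - 1 ∈ RingHom.ker ρ := by
      rw [RingHom.mem_ker, map_sub, map_add, map_mul, map_mul, map_one, ha, hb, hab,
        sub_self]
    rw [hker, Ideal.mem_span_singleton'] at hker1
    obtain ⟨w, hw⟩ := hker1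
    have hbv : π b * π v = 1 + (π w * π (C γ) - π a * π f) := by
      have h4 : b * v = 1 + (w * C γ - a * f) := by linear_combination -hw
      calc π b * π v = π (b * v) := (map_mul π b v).symm
        _ = π (1 + (w * C γ - a * f)) := by rw [h4]
        _ = 1 + (π w * π (C γ) - π a * π f) := by
            rw [map_add, map_one, map_sub, map_mul, map_mul]
    have hnil2 : IsNilpotent (π w * π (C γ) - π a * π f) := by
      refine Commute.isNilpotent_sub (Commute.all _ _) ?_ ?_
      · exact (Commute.all _ _).isNilpotent_mul_left hγnil
      · exact (Commute.all _ _).isNilpotent_mul_left hfnil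
    have : IsUnit (π b * π v) := hbv ▸ hnil2.isUnit_one_add
    exact isUnit_of_mul_isUnit_right this
  -- the ideal upstairs
  set J := Ideal.comap π I with hJdef
  have hπs : Function.Surjective ⇑π := Ideal.Quotient.mk_surjective
  have hIJ : Ideal.map π J = I := Ideal.map_comap_of_surjective π hπs I
  have hgJ : g ∈ J := by
    rw [hJdef, Ideal.mem_comap, hπg]; exact zero_mem I
  -- the reduced ideal
  set J' := Ideal.map ρ J with hJ'def
  have hfNJ' : (ρ f) ^ p ^ s ∈ J' := by
    rw [← hρg]; exact Ideal.mem_map_of_mem ρ hgJ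
  obtain ⟨d, hd⟩ := (inferInstance : Submodule.IsPrincipal J')
  have hddvd : d ∣ (ρ f) ^ p ^ s := by
    rw [hd] at hfNJ'
    exact (Ideal.mem_span_singleton).mp hfNJ'
  obtain ⟨ω, hωN, hassoc⟩ := (dvd_prime_pow hfp _).mp hddvd
  have hJ' : J' = Ideal.span {(ρ f) ^ ω} := by
    rw [hd, Ideal.submodule_span_eq, Ideal.span_singleton_eq_span_singleton.mpr hassoc]
  -- the torsion ideal
  set T := Submodule.colon J (Ideal.span {C γ}) with hTdef
  have hTmem : ∀ w : R[X], w ∈ T ↔ C γ * w ∈ J := by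
    intro w
    rw [hTdef, Ideal.mem_colon_span_singleton, mul_comm]
  have hJT : J ≤ T := by
    intro z hz
    rw [hTmem]
    exact Ideal.mul_mem_left J _ hz
  set T' := Ideal.map ρ T with hT'def
  have hfNT' : (ρ f) ^ p ^ s ∈ T' := by
    rw [← hρg]; exact Ideal.mem_map_of_mem ρ (hJT hgJ)
  obtain ⟨e, he⟩ := (inferInstance : Submodule.IsPrincipal T')
  have hedvd : e ∣ (ρ f) ^ p ^ s := by
    rw [he] at hfNT'
    exact (Ideal.mem_span_singleton).mp hfNT'
  obtain ⟨μ, hμN, hassoc'⟩ := (dvd_prime_pow hfp _).mp hedvd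
  have hT' : T' = Ideal.span {(ρ f) ^ μ} := by
    rw [he, Ideal.submodule_span_eq, Ideal.span_singleton_eq_span_singleton.mpr hassoc']
  -- reduction of torsion elements
  have hTred : ∀ w : R[X], w ∈ T → ∃ r, C γ * w = C γ * (f ^ μ * r) := by
    intro w hw
    have h5 : ρ w ∈ T' := Ideal.mem_map_of_mem ρ hw
    rw [hT', Ideal.mem_span_singleton] at h5
    obtain ⟨r', hr'⟩ := h5
    obtain ⟨r, hr⟩ := hρs r'
    have h6 : w - f ^ μ * r ∈ RingHom.ker ρ := by
      rw [RingHom.mem_ker, map_sub, map_mul, map_pow, hr, ← hr', sub_self]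
    rw [hker, Ideal.mem_span_singleton'] at h6
    obtain ⟨u, hu⟩ := h6
    refine ⟨r, ?_⟩
    have h7 : C γ * w = C γ * (f ^ μ * r) + (C γ * C γ) * u := by linear_combination (-(C γ)) * hu
    rw [hCC, zero_mul, add_zero] at h7
    exact h7
  have hγfμJ : C γ * f ^ μ ∈ J := by
    have h8 : ρ (f ^ μ) ∈ T' := by
      rw [map_pow, hT']
      exact Ideal.subset_span rfl
    obtain ⟨t0, ht0T, ht0⟩ := (Ideal.mem_map_iff_of_surjective ρ hρs).mp h8
    have h9 : f ^ μ - t0 ∈ RingHom.ker ρ := by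
      rw [RingHom.mem_ker, map_sub, ht0, sub_self]
    rw [hker, Ideal.mem_span_singleton'] at h9
    obtain ⟨u, hu⟩ := h9
    have h10 : C γ * f ^ μ = C γ * t0 + (C γ * C γ) * u := by
      linear_combination (-(C γ)) * hu
    rw [hCC, zero_mul, add_zero] at h10
    rw [h10]
    exact (hTmem t0).mp ht0T
  -- choose c ∈ J with ρ c = (ρ f) ^ ω
  have hdJ' : d ∈ J' := by rw [hd]; exact Ideal.subset_span rfl
  obtain ⟨c₀, hc₀J, hc₀⟩ := (Ideal.mem_map_iff_of_surjective ρ hρs).mp hdJ'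
  obtain ⟨uu, huu⟩ := hassoc
  obtain ⟨e', heu, heC⟩ := Polynomial.isUnit_iff.mp uu.isUnit
  obtain ⟨a, ha⟩ := Ideal.Quotient.mk_surjective e'
  have haU : IsUnit a := by
    by_contra hau
    have h25 : mkγ a = 0 := Ideal.Quotient.eq_zero_iff_mem.mpr ((hmax a).mpr hau)
    rw [ha] at h25
    exact heu.ne_zero (by simpa using h25)
  set c := C a * c₀ with hcdef
  have hcJ : c ∈ J := Ideal.mul_mem_left J _ hc₀J
  have hρc : ρ c = ρ f ^ ω := by
    rw [hcdef, map_mul, hc₀]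
    have h26 : ρ (C a) = C e' := by rw [hρ, coe_mapRingHom, map_C, ha]
    rw [h26, heC, mul_comm, huu]
  -- c = f ^ ω + h * C γ
  have hhex : ∃ h1 : R[X], h1 * C γ = c - f ^ ω := by
    have : c - f ^ ω ∈ RingHom.ker ρ := by
      rw [RingHom.mem_ker, map_sub, map_pow, hρc, sub_self]
    rw [hker, Ideal.mem_span_singleton'] at this
    exact this
  obtain ⟨h, hh⟩ := hhex
  have hγcJ : C γ * c ∈ J := Ideal.mul_mem_left J _ hcJ
  have hγfωJ : C γ * f ^ ω ∈ J := by
    have h11 : C γ * f ^ ω = C γ * c + (C γ * C γ) * (-h) := by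
      linear_combination C γ * hh
    rw [hCC, zero_mul, add_zero] at h11
    rw [h11]
    exact hγcJ
  have hμω : μ ≤ ω := by
    have h12 : f ^ ω ∈ T := (hTmem _).mpr hγfωJ
    have h13 : ρ f ^ ω ∈ T' := by
      rw [← map_pow]; exact Ideal.mem_map_of_mem ρ h12
    rw [hT', Ideal.mem_span_singleton] at h13
    have hz : (ρ f) ^ ω ≠ 0 := pow_ne_zero _ hρfm.ne_zero
    have h14 := Polynomial.natDegree_le_of_dvd h13 hz
    rw [natDegree_pow, natDegree_pow, hρfnd] at h14
    exact Nat.le_of_mul_le_mul_right h14 hn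
  -- the two-generator description of J
  have hJeq : J = Ideal.span {c, C γ * f ^ μ} := by
    apply le_antisymm
    · intro dd hdd
      have h14 : ρ dd ∈ J' := Ideal.mem_map_of_mem ρ hdd
      rw [hJ', Ideal.mem_span_singleton] at h14
      obtain ⟨q', hq'⟩ := h14
      obtain ⟨q, hq⟩ := hρs q'
      have h15 : dd - c * q ∈ RingHom.ker ρ := by
        rw [RingHom.mem_ker, map_sub, map_mul, hρc, hq, ← hq', sub_self]
      rw [hker, Ideal.mem_span_singleton'] at h15
      obtain ⟨u, hu⟩ := h15
      have huT : u ∈ T := by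
        rw [hTmem]
        have h27 : C γ * u = dd - c * q := by linear_combination hu
        rw [h27]
        exact Ideal.sub_mem J hdd (Ideal.mul_mem_right _ _ hcJ)
      obtain ⟨r, hr⟩ := hTred u huT
      refine Ideal.mem_span_pair.mpr ⟨q, r, ?_⟩
      linear_combination hu - hr
    · rw [Ideal.span_le]
      rintro z hz
      simp only [Set.mem_insert_iff, Set.mem_singleton_iff] at hz
      rcases hz with rfl | rfl
      · exact hcJ
      · exact hγfμJ
  have hI : I = Ideal.span {π c, π (C γ * f ^ μ)} := by
    rw [← hIJ, hJeq, Ideal.map_span, Set.image_insert_eq, Set.image_singleton]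
  rcases eq_or_lt_of_le hωN with hωeq | hωlt
  · -- ω = p ^ s
    rw [hωeq] at hh
    have hcg : (h - h₀) * C γ = c - g := by linear_combination hh - hh₀
    have hhT : h - h₀ ∈ T := by
      rw [hTmem]
      have h28 : C γ * (h - h₀) = c - g := by linear_combination hcg
      rw [h28]
      exact Ideal.sub_mem J hcJ hgJ
    obtain ⟨r, hr⟩ := hTred _ hhT
    have hπc : π c = π (C γ * f ^ μ) * π r := by
      have h16 : c = g + C γ * f ^ μ * r := by linear_combination -hcg + hr
      rw [h16, map_add, hπg, zero_add, show C γ * f ^ μ * r = C γ * f ^ μ * r from rfl,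
        map_mul]
    have hI2 : I = Ideal.span {π (C γ * f ^ μ)} := by
      rw [hI, Set.pair_comm]
      exact aux_span_pair_mem _ _
        (by rw [hπc]; exact Ideal.mul_mem_right _ _ (Ideal.subset_span rfl))
    rcases eq_or_lt_of_le hμN with hμeq | hμlt
    · left
      have h17 : π (C γ * f ^ μ) = 0 := by
        rw [hμeq, map_mul, map_pow, hfN]
        have h18 : π (C γ) * -(π h₀ * π (C γ)) = -(π h₀) * π (C γ) ^ 2 := by ring
        rw [h18, hγK, mul_zero]
      rw [hI2, h17]
      exact Ideal.span_singleton_eq_bot.mpr rfl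
    · right; right; left
      exact ⟨μ, hμlt, hI2⟩
  · rcases Nat.eq_zero_or_pos ω with hω0 | hωpos
    · -- ω = 0 : I = ⊤
      right; left
      rw [hω0] at hh
      have hcu : IsUnit (π c) := by
        have h18 : π c = 1 + π h * π (C γ) := by
          have h29 : c = 1 + h * C γ := by linear_combination -hh
          rw [h29, map_add, map_one, map_mul]
        rw [h18]
        exact ((Commute.all _ _).isNilpotent_mul_left hγnil).isUnit_one_add
      exact Ideal.eq_top_of_isUnit_mem I (hI ▸ Ideal.subset_span (Set.mem_insert _ _)) hcu
    · -- 0 < ω < p ^ s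
      set h' := ρ h with hh'def
      have hfμm : ((ρ f) ^ μ).Monic := hρfm.pow μ
      set r' := h' %ₘ ((ρ f) ^ μ) with hr'def
      set q' := h' /ₘ ((ρ f) ^ μ) with hq'def
      have hdiv : r' + (ρ f) ^ μ * q' = h' := modByMonic_add_div h' ((ρ f) ^ μ)
      rcases eq_or_ne r' 0 with hr0 | hrne
      · -- G = 0 cases
        obtain ⟨q, hq⟩ := hρs q'
        have h19 : h - f ^ μ * q ∈ RingHom.ker ρ := by
          rw [RingHom.mem_ker, map_sub, map_mul, map_pow, hq, ← hh'def, ← hdiv, hr0,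
            zero_add, sub_self]
        rw [hker, Ideal.mem_span_singleton'] at h19
        obtain ⟨u, hu⟩ := h19
        have hπc : π c = π (f ^ ω) + π (C γ * f ^ μ) * π q := by
          have h20 : c = f ^ ω + C γ * f ^ μ * q + (C γ * C γ) * u := by
            linear_combination -hh - C γ * hu
          rw [hCC, zero_mul, add_zero] at h20
          rw [h20, map_add, map_mul]
        have hI3 : I = Ideal.span {π (f ^ ω), π (C γ * f ^ μ)} := by
          rw [hI, ← aux_span_pair_add (π (f ^ ω)) (π (C γ * f ^ μ)) (π q), ← hπc]
        rcases eq_or_lt_of_le hμω with hμω' | hμω'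
        · right; right; right; left
          refine ⟨ω, 0, 0, hωpos, hωlt, Or.inl rfl, fun hne => absurd rfl hne, ?_⟩
          rw [mul_zero, add_zero]
          rw [hμω'] at hI3
          exact hI3.trans (aux_span_pair_mem _ _
            (by rw [map_mul]; exact Ideal.mul_mem_left _ _ (Ideal.subset_span rfl)))
        · right; right; right; right
          refine ⟨ω, 0, μ, 0, hμω', hωlt, Or.inl rfl, fun hne => absurd rfl hne, ?_⟩
          rw [mul_zero, add_zero]
          exact hI3
      · -- G a unit
        obtain ⟨t, v', hv'nd, hrfac⟩ := WfDvdMonoid.max_power_factor hrne hirr'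
        have htμ : t < μ := by
          by_contra hle
          push_neg at hle
          have hdvd : (ρ f) ^ μ ∣ r' := by
            rw [hrfac]
            exact dvd_mul_of_dvd_left (pow_dvd_pow _ hle) _
          have hdeg := Polynomial.degree_le_of_dvd hdvd hrne
          have hlt2 := Polynomial.degree_modByMonic_lt h' hfμm
          rw [← hr'def] at hlt2
          exact absurd hdeg hlt2.not_ge
        obtain ⟨q, hq⟩ := hρs q'
        obtain ⟨v, hv⟩ := hρs v'
        have h21 : h - (f ^ μ * q + f ^ t * v) ∈ RingHom.ker ρ := by
          rw [RingHom.mem_ker, map_sub, map_add, map_mul, map_mul, map_pow, map_pow, hq,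
            hv, ← hh'def, show (ρ f) ^ μ * q' + (ρ f) ^ t * v' = r' + (ρ f) ^ μ * q' by
              rw [hrfac]; ring, hdiv, sub_self]
        rw [hker, Ideal.mem_span_singleton'] at h21
        obtain ⟨u, hu⟩ := h21
        have hπc : π c = (π (f ^ ω) + π (C γ * f ^ t) * π v) + π (C γ * f ^ μ) * π q := by
          have h22 : c = (f ^ ω + C γ * f ^ t * v + C γ * f ^ μ * q) + (C γ * C γ) * u := by
            linear_combination -hh - C γ * hu
          rw [hCC, zero_mul, add_zero] at h22
          rw [h22]
          simp only [map_add, map_mul]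
        have hGu : IsUnit (π v) := by
          apply hunit
          rw [hv]
          exact hv'nd
        have hI3 : I = Ideal.span {π (f ^ ω) + π (C γ * f ^ t) * π v, π (C γ * f ^ μ)} := by
          rw [hI, ← aux_span_pair_add (π (f ^ ω) + π (C γ * f ^ t) * π v)
            (π (C γ * f ^ μ)) (π q), ← hπc]
        rcases eq_or_lt_of_le hμω with hμω' | hμω'
        · right; right; right; left
          refine ⟨ω, t, π v, hωpos, hωlt, Or.inr hGu, fun _ => hμω' ▸ htμ, ?_⟩
          rw [hμω'] at hI3
          have hbA : π (C γ * f ^ ω) ∈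
              Ideal.span {π (f ^ ω) + π (C γ * f ^ t) * π v} := by
            have e1 : π (C γ) * π (f ^ ω) = π (C γ * f ^ ω) := (map_mul π _ _).symm
            have e2 : π (C γ) * (π (C γ * f ^ t) * π v) = 0 := by
              rw [← mul_assoc, ← map_mul,
                show C γ * (C γ * f ^ t) = (C γ * C γ) * f ^ t by ring, hCC, zero_mul,
                map_zero, zero_mul]
            have hz : π (C γ) * (π (f ^ ω) + π (C γ * f ^ t) * π v) = π (C γ * f ^ ω) := by
              rw [mul_add, e1, e2, add_zero]
            rw [← hz]
            exact Ideal.mul_mem_left _ _ (Ideal.subset_span rfl)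
          exact hI3.trans (aux_span_pair_mem _ _ hbA)
        · right; right; right; right
          exact ⟨ω, t, μ, π v, hμω', hωlt, Or.inr hGu, fun _ => htμ, hI3⟩
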